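/- Let R be a commutative ring, I a finitely generated ideal of R, J an index type, and (M_j)_{j ∈ J} a family of R-modules. Then the submodule I • (⊤ : Submodule R (Π_{j ∈ J} M_j)) of the product module equals the submodule of all elements m : Π_{j ∈ J} M_j such that m j ∈ I • (⊤ : Submodule R (M_j)) for every j ∈ J. -/
import Mathlib

open Submodule Pointwise

lemma mem_finset_span_smul_top {R : Type*} [CommRing R] {M : Type*} [AddCommGroup M]
    [Module R M] (s : Finset R) (x : M) :
    x ∈ (Ideal.span (s : Set R)) • (⊤ : Submodule R M) ↔
      ∃ f : R → M, x = ∑ a ∈ s, a • f a := by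
  classical
  constructor
  · intro hx
    induction s using Finset.cons_induction generalizing x with
    | empty =>
      simp only [Finset.coe_empty, Ideal.span_empty, Submodule.bot_smul,
        Submodule.mem_bot] at hx
      exact ⟨fun _ => 0, by simp [hx]⟩
    | cons a s ha ih =>
      rw [Finset.coe_cons, ← Set.singleton_union, Ideal.span_union, Submodule.sup_smul,
        Submodule.mem_sup] at hx
      obtain ⟨y, hy, z, hz, rfl⟩ := hx
      rw [Submodule.ideal_span_singleton_smul] at hy
      obtain ⟨w, -, rfl⟩ := hy
      obtain ⟨f, rfl⟩ := ih z hz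
      refine ⟨Function.update f a w, ?_⟩
      rw [Finset.sum_cons, Function.update_self]
      congr 1
      exact Finset.sum_congr rfl fun b hb => by
        rw [Function.update_of_ne (by rintro rfl; exact ha hb)]
  · rintro ⟨f, rfl⟩
    exact Submodule.sum_mem _ fun a haS =>
      Submodule.smul_mem_smul (Ideal.subset_span haS) trivial

/-- For a finitely generated ideal `I` of a commutative ring `R` and a family of
`R`-modules `(M j)`, the submodule `I • ⊤` of the product module `Π j, M j` is exactly the
submodule of elements all of whose components lie in `I • ⊤`. -/
theorem smul_top_pi_of_fg
    {R : Type*} [CommRing R] (I : Ideal R) (hI : I.FG)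
    {J : Type*} (M : J → Type*) [∀ j, AddCommGroup (M j)] [∀ j, Module R (M j)] :
    I • (⊤ : Submodule R (∀ j, M j)) =
      Submodule.pi Set.univ (fun j => I • (⊤ : Submodule R (M j))) := by
  obtain ⟨s, rfl⟩ := hI
  apply le_antisymm
  · intro x hx
    refine Submodule.smul_induction_on hx (fun r hr n _ j _ => ?_)
      (fun x y hx hy j hj => (Submodule.add_mem _ (hx j hj) (hy j hj)))
    exact Submodule.smul_mem_smul hr trivial
  · intro m hm
    have : ∀ j, ∃ f : R → M j, m j = ∑ a ∈ s, a • f a := fun j =>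
      (mem_finset_span_smul_top s (m j)).mp (hm j trivial)
    choose f hf using this
    rw [mem_finset_span_smul_top]
    exact ⟨fun a j => f j a, funext fun j => by simp [hf j, Finset.sum_apply]⟩
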